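/- The Ricci curvature of (F⁴,g) in the orthonormal frame {e₁,...,e₄} is diagonal with Ric(e₁,e₁) = Ric(e₂,e₂) = 0 and Ric(e₃,e₃) = Ric(e₄,e₄) = -6, and all off-diagonal components Ric(eᵢ,eⱼ) (i ≠ j) vanish. -/

import Mathlib

/-- The connection coefficients `Γᵢⱼᵏ` of Lemma 1 in the orthonormal frame
`{e₁,…,e₄}` on `(F⁴,g)` (0-indexed): `∇_{eᵢ}eⱼ = ∑ₖ Γ i j k • eₖ`. -/
def Gam : Fin 4 → Fin 4 → Fin 4 → ℝ :=
  ![![![0,0,0,1], ![0,0,1,0], ![0,-1,0,0], ![-1,0,0,0]],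
    ![![0,0,1,0], ![0,0,0,-1], ![-1,0,0,0], ![0,1,0,0]],
    ![![0,-1,0,0], ![1,0,0,0], ![0,0,0,2], ![0,0,-2,0]],
    ![![0,0,0,0], ![0,0,0,0], ![0,0,0,0], ![0,0,0,0]]]

/-- Structure constants of the frame, `[eᵢ,eⱼ] = ∑ₖ c i j k • eₖ`, determined by
torsion-freeness: `c i j k = Γ i j k - Γ j i k`. -/
def structC (i j k : Fin 4) : ℝ := Gam i j k - Gam j i k

/-- The curvature components `Riem i j k l = g(R(eᵢ,eⱼ)eₖ, eₗ)`, where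
`R(X,Y)Z = ∇_X∇_Y Z - ∇_Y∇_X Z - ∇_{[X,Y]}Z` and all connection coefficients
are constant in the frame. -/
def Riem (i j k l : Fin 4) : ℝ :=
  (∑ m : Fin 4, (Gam j k m * Gam i m l - Gam i k m * Gam j m l))
    - ∑ m : Fin 4, structC i j m * Gam m k l

/-- The Ricci curvature `Ric(eᵢ,eⱼ) = ∑ₐ g(R(eᵢ,eₐ)eₐ, eⱼ)` in the frame. -/
def RicF (i j : Fin 4) : ℝ := ∑ a : Fin 4, Riem i a a j

set_option maxHeartbeats 4000000 in
/-- Lemma 2: the Ricci curvature of `(F⁴,g)` in the orthonormal frame is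
`diag(0, 0, -6, -6)`, with all off-diagonal components vanishing. -/
theorem ricci_F4 (i j : Fin 4) :
    RicF i j = if i = j then (if i = 0 ∨ i = 1 then 0 else -6) else 0 := by
  fin_cases i <;> fin_cases j <;>
    norm_num [RicF, Riem, structC, Gam, Fin.sum_univ_four, Matrix.vecHead, Matrix.vecTail,
      Fin.ext_iff, Matrix.cons_val_zero, Matrix.cons_val_one, Matrix.cons_val_two,
      Matrix.cons_val_three]
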